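/- One-step inequality for convex quasi-self-concordant objectives: let f : E → ℝ be convex, three times continuously differentiable, and quasi-self-concordant with parameter M ≥ 0. Let ψ : E → ℝ be convex, x ∈ E, s a subgradient of ψ at x, H a symmetric positive semidefinite linear map with ‖H − ∇²f(x)‖ ≤ β for some β ≥ 0, and α ≥ M‖∇f(x) + s‖ + β with α > 0. If x⁺ is a composite step from x with parameters (H, α), then ⟨F'(x⁺), x − x⁺⟩ ≥ ‖F'(x⁺)‖²/(2α), where F'(x⁺) := ∇f(x⁺) − ∇f(x) − (H + αI)(x⁺ − x). -/

import Mathlib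

open scoped RealInnerProductSpace
open Real Set

def IsSymmPSD {n : ℕ} (H : EuclideanSpace ℝ (Fin n) →L[ℝ] EuclideanSpace ℝ (Fin n)) : Prop :=
  (∀ u v, ⟪H u, v⟫ = ⟪u, H v⟫) ∧ ∀ u, 0 ≤ ⟪H u, u⟫

def IsSubgradAt {n : ℕ} (ψ : EuclideanSpace ℝ (Fin n) → ℝ)
    (s x : EuclideanSpace ℝ (Fin n)) : Prop :=
  ∀ y, ψ x + ⟪s, y - x⟫ ≤ ψ y

def CompositeStep {n : ℕ} (g : EuclideanSpace ℝ (Fin n))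
    (H : EuclideanSpace ℝ (Fin n) →L[ℝ] EuclideanSpace ℝ (Fin n)) (α : ℝ)
    (ψ : EuclideanSpace ℝ (Fin n) → ℝ) (x xp : EuclideanSpace ℝ (Fin n)) : Prop :=
  ∀ y, ψ xp ≤ ⟪g + (H (xp - x) + α • (xp - x)), y - xp⟫ + ψ y

noncomputable def hess {n : ℕ} (f : EuclideanSpace ℝ (Fin n) → ℝ)
    (x : EuclideanSpace ℝ (Fin n)) :
    EuclideanSpace ℝ (Fin n) →L[ℝ] EuclideanSpace ℝ (Fin n) :=
  fderiv ℝ (gradient f) x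


lemma monotone_hasDerivAt_nonneg {g : ℝ → ℝ} {g' t : ℝ}
    (hm : Monotone g) (h : HasDerivAt g g' t) : 0 ≤ g' := by
  have h1 : Filter.Tendsto (slope g t) (nhdsWithin t (Set.Ioi t)) (nhds g') :=
    (hasDerivAt_iff_tendsto_slope.mp h).mono_left
      (nhdsWithin_mono t (fun z hz => ne_of_gt hz))
  refine ge_of_tendsto h1 ?_
  filter_upwards [self_mem_nhdsWithin] with z hz
  have h2 : (0:ℝ) ≤ g z - g t := sub_nonneg.2 (hm (le_of_lt hz))
  have hz' : (0:ℝ) < z - t := sub_pos.2 hz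
  rw [slope_def_field]
  positivity

lemma le_at_zero_of_deriv_nonpos {g g' : ℝ → ℝ} (hd : ∀ t, HasDerivAt g (g' t) t)
    (h0 : ∀ t ∈ Set.Ioo (0:ℝ) 1, g' t ≤ 0) : ∀ t ∈ Set.Icc (0:ℝ) 1, g t ≤ g 0 := by
  have hanti : AntitoneOn g (Set.Icc (0:ℝ) 1) := by
    refine antitoneOn_of_deriv_nonpos (convex_Icc 0 1) ?_ ?_ ?_
    · exact fun t _ => (hd t).continuousAt.continuousWithinAt
    · intro t ht
      rw [interior_Icc] at ht
      exact (hd t).differentiableAt.differentiableWithinAt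
    · intro t ht
      rw [interior_Icc] at ht
      rw [(hd t).deriv]
      exact h0 t ht
  intro t ht
  exact hanti (Set.left_mem_Icc.2 zero_le_one) ht ht.1

lemma real_exp_le_one_add_two_mul {z : ℝ} (h0 : 0 ≤ z) (h1 : z ≤ 1) :
    Real.exp z ≤ 1 + 2 * z := by
  have hc := convexOn_exp.2 (Set.mem_univ (0:ℝ)) (Set.mem_univ (1:ℝ))
    (show (0:ℝ) ≤ 1 - z by linarith) h0 (show (1 - z) + z = 1 by ring)
  simp only [smul_eq_mul, mul_zero, mul_one, zero_add, Real.exp_zero] at hc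
  have he : Real.exp 1 < 2.7182818286 := Real.exp_one_lt_d9
  nlinarith [Real.exp_pos (1:ℝ)]

section QSCAux
variable {n : ℕ}
local notation "E" => EuclideanSpace ℝ (Fin n)

/-- The inverse of `toDual` as a genuinely ℝ-linear continuous map. -/
noncomputable def dualIso (n : ℕ) :
    StrongDual ℝ (EuclideanSpace ℝ (Fin n)) →L[ℝ] EuclideanSpace ℝ (Fin n) where
  toFun := fun ℓ => (InnerProductSpace.toDual ℝ (EuclideanSpace ℝ (Fin n))).symm ℓ
  map_add' := fun a b => by simp
  map_smul' := fun c a => by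
    simp [LinearIsometryEquiv.map_smulₛₗ, starRingEnd_apply]
  cont := (InnerProductSpace.toDual ℝ (EuclideanSpace ℝ (Fin n))).symm.continuous

lemma hasDerivAt_line (x r : E) (t : ℝ) :
    HasDerivAt (fun t : ℝ => x + t • r) r t := by
  simpa using ((hasDerivAt_id t).smul_const r).const_add x

lemma contDiff_fderiv_of (f : E → ℝ) (hf : ContDiff ℝ 3 f) : ContDiff ℝ 2 (fderiv ℝ f) :=
  hf.fderiv_right (by norm_num)

lemma gradient_inner_eq (f : E → ℝ) (z w : E) :
    ⟪gradient f z, w⟫ = fderiv ℝ f z w := by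
  simp [gradient, InnerProductSpace.toDual_symm_apply]

lemma hess_inner (f : E → ℝ) (hf : ContDiff ℝ 3 f) (y u v : E) :
    ⟪hess f y u, v⟫ = fderiv ℝ (fderiv ℝ f) y u v := by
  have hd : DifferentiableAt ℝ (fderiv ℝ f) y :=
    ((contDiff_fderiv_of f hf).differentiable (by norm_num)).differentiableAt
  have hgrad : HasFDerivAt (gradient f) ((dualIso n).comp (fderiv ℝ (fderiv ℝ f) y)) y :=
    (dualIso n).hasFDerivAt.comp y hd.hasFDerivAt
  have h2 : hess f y = (dualIso n).comp (fderiv ℝ (fderiv ℝ f) y) := hgrad.fderiv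
  rw [hess] at h2
  show ⟪(fderiv ℝ (gradient f) y) u, v⟫ = _
  rw [h2]
  show ⟪(InnerProductSpace.toDual ℝ (EuclideanSpace ℝ (Fin n))).symm _, v⟫ = _
  rw [InnerProductSpace.toDual_symm_apply]
  rfl

lemma hasDerivAt_fderiv_line (f : E → ℝ) (hf : ContDiff ℝ 3 f) (x r w : E) (t : ℝ) :
    HasDerivAt (fun t : ℝ => fderiv ℝ f (x + t • r) w)
      (fderiv ℝ (fderiv ℝ f) (x + t • r) r w) t := by
  have hd : DifferentiableAt ℝ (fderiv ℝ f) (x + t • r) :=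
    ((contDiff_fderiv_of f hf).differentiable (by norm_num)).differentiableAt
  have h1 : HasFDerivAt (fun z => fderiv ℝ f z w)
      ((ContinuousLinearMap.apply ℝ ℝ w).comp (fderiv ℝ (fderiv ℝ f) (x + t • r)))
      (x + t • r) :=
    (ContinuousLinearMap.apply ℝ ℝ w).hasFDerivAt.comp _ hd.hasFDerivAt
  exact h1.comp_hasDerivAt t (hasDerivAt_line x r t)

lemma hasDerivAt_B2_line (f : E → ℝ) (hf : ContDiff ℝ 3 f) (x r u v : E) (t : ℝ) :
    HasDerivAt (fun t : ℝ => fderiv ℝ (fderiv ℝ f) (x + t • r) u v)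
      (iteratedFDeriv ℝ 3 f (x + t • r) ![r, u, v]) t := by
  have hd : DifferentiableAt ℝ (iteratedFDeriv ℝ 2 f) (x + t • r) :=
    (hf.differentiable_iteratedFDeriv (by norm_num)).differentiableAt
  have h1 : HasFDerivAt (fun z => iteratedFDeriv ℝ 2 f z ![u, v])
      ((ContinuousMultilinearMap.apply ℝ (fun _ : Fin 2 => E) ℝ ![u, v]).comp
        (fderiv ℝ (iteratedFDeriv ℝ 2 f) (x + t • r)))
      (x + t • r) :=
    (ContinuousMultilinearMap.apply ℝ (fun _ : Fin 2 => E) ℝ ![u, v]).hasFDerivAt.comp _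
      hd.hasFDerivAt
  have h2 := h1.comp_hasDerivAt t (hasDerivAt_line x r t)
  have e1 : (fun t : ℝ => iteratedFDeriv ℝ 2 f (x + t • r) ![u, v])
      = fun t : ℝ => fderiv ℝ (fderiv ℝ f) (x + t • r) u v := by
    funext t
    simp [iteratedFDeriv_two_apply]
  have e2 : ((ContinuousMultilinearMap.apply ℝ (fun _ : Fin 2 => E) ℝ ![u, v]).comp
        (fderiv ℝ (iteratedFDeriv ℝ 2 f) (x + t • r))) r
      = iteratedFDeriv ℝ 3 f (x + t • r) ![r, u, v] := by
    have := iteratedFDeriv_succ_apply_left (𝕜 := ℝ) (f := f) (x := x + t • r)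
      (n := 2) ![r, u, v]
    simp only [Matrix.cons_val_zero] at this
    rw [ContinuousLinearMap.comp_apply, ContinuousMultilinearMap.apply_apply, this]
    congr 1
  have h3 : HasDerivAt (fun t : ℝ => iteratedFDeriv ℝ 2 f (x + t • r) ![u, v])
      (iteratedFDeriv ℝ 3 f (x + t • r) ![r, u, v]) t := by
    rw [← e2]; exact h2
  rw [e1] at h3; exact h3

lemma convexOn_line (f : E → ℝ) (hconv : ConvexOn ℝ Set.univ f) (y u : E) :
    ConvexOn ℝ Set.univ (fun t : ℝ => f (y + t • u)) := by
  refine ⟨convex_univ, fun t1 _ t2 _ a b ha hb hab => ?_⟩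
  have key : y + (a * t1 + b * t2) • u = a • (y + t1 • u) + b • (y + t2 • u) := by
    match_scalars
    · linear_combination hab.symm
    · ring
  have h2 := hconv.2 (Set.mem_univ (y + t1 • u)) (Set.mem_univ (y + t2 • u)) ha hb hab
  simpa [key] using h2

lemma B2_diag_nonneg (f : E → ℝ) (hf : ContDiff ℝ 3 f) (hconv : ConvexOn ℝ Set.univ f)
    (y u : E) : 0 ≤ fderiv ℝ (fderiv ℝ f) y u u := by
  set ψ1 : ℝ → ℝ := fun t => fderiv ℝ f (y + t • u) u with hψ1
  have hℓd : ∀ t : ℝ, HasDerivAt (fun t : ℝ => f (y + t • u)) (ψ1 t) t := by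
    intro t
    have hF : HasFDerivAt f (fderiv ℝ f (y + t • u)) (y + t • u) :=
      ((hf.differentiable (by norm_num)) (y + t • u)).hasFDerivAt
    exact hF.comp_hasDerivAt t (hasDerivAt_line y u t)
  have hmono : Monotone ψ1 := by
    have hconvℓ := convexOn_line f hconv y u
    have hmon := hconvℓ.monotoneOn_deriv (fun t _ => (hℓd t).differentiableAt)
    intro a b hab
    have h3 := hmon (Set.mem_univ a) (Set.mem_univ b) hab
    rwa [(hℓd a).deriv, (hℓd b).deriv] at h3
  have hψ1d : HasDerivAt ψ1 (fderiv ℝ (fderiv ℝ f) (y + (0:ℝ) • u) u u) 0 :=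
    hasDerivAt_fderiv_line f hf y u u 0
  have hres := monotone_hasDerivAt_nonneg hmono hψ1d
  simpa using hres

end QSCAux

section MainThm
variable {n : ℕ}
local notation "E" => EuclideanSpace ℝ (Fin n)

set_option maxHeartbeats 2000000 in
theorem qsc_one_step_inequality'
    (f : E → ℝ) (hf : ContDiff ℝ 3 f)
    (hconv : ConvexOn ℝ Set.univ f)
    (M : ℝ) (hM : 0 ≤ M)
    (hqsc : ∀ x u v : E,
      iteratedFDeriv ℝ 3 f x ![u, u, v] ≤ M * ⟪hess f x u, u⟫ * ‖v‖)
    (ψ : E → ℝ) (hψ : ConvexOn ℝ Set.univ ψ)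
    (x xp s : E) (hs : ∀ y, ψ x + ⟪s, y - x⟫ ≤ ψ y)
    (H : E →L[ℝ] E) (hH : (∀ u v, ⟪H u, v⟫ = ⟪u, H v⟫) ∧ ∀ u, 0 ≤ ⟪H u, u⟫)
    (β : ℝ) (hβ : 0 ≤ β) (hHerr : ‖H - hess f x‖ ≤ β)
    (α : ℝ) (hαpos : 0 < α)
    (hα : M * ‖gradient f x + s‖ + β ≤ α)
    (hstep : ∀ y, ψ xp ≤ ⟪gradient f x + (H (xp - x) + α • (xp - x)), y - xp⟫ + ψ y) :
    ‖gradient f xp - gradient f x - (H (xp - x) + α • (xp - x))‖ ^ 2 / (2 * α)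
      ≤ ⟪gradient f xp - gradient f x - (H (xp - x) + α • (xp - x)), x - xp⟫ := by
  by_cases hxp0 : xp = x
  · simp [hxp0]
  -- notation
  set r : E := xp - x with hrdef
  have hR : 0 < ‖r‖ := by
    rw [norm_pos_iff]
    intro h
    exact hxp0 (by rwa [hrdef, sub_eq_zero] at h)
  set G : ℝ := ‖gradient f x + s‖ with hGdef
  set R : ℝ := ‖r‖ with hRdef
  set q : ℝ := M * R with hqdef
  -- step 1 : basic inequality from the composite step and the subgradient
  have h1 : ⟪H r, r⟫ + α * (R * R) ≤ G * R := by
    have h1' := hstep x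
    have h2' := hs xp
    have hxm : x - xp = -(xp - x) := by abel
    rw [hxm, inner_neg_right, inner_add_left, inner_add_left, real_inner_smul_left] at h1'
    have h3 : ⟪gradient f x, xp - x⟫ + (⟪H (xp - x), xp - x⟫ + α * ⟪xp - x, xp - x⟫)
        + ⟪s, xp - x⟫ ≤ 0 := by linarith
    have h4 : -(⟪gradient f x, xp - x⟫ + ⟪s, xp - x⟫) ≤ ‖gradient f x + s‖ * ‖xp - x‖ := by
      have h5 := abs_real_inner_le_norm (gradient f x + s) (xp - x)
      rw [inner_add_left] at h5
      have h6 := abs_le.1 h5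
      linarith [h6.1]
    rw [real_inner_self_eq_norm_mul_norm] at h3
    linarith
  have hHr : 0 ≤ ⟪H r, r⟫ := hH.2 r
  have hRG : α * R ≤ G := by
    have h7 : α * R * R ≤ G * R := by nlinarith
    exact le_of_mul_le_mul_right h7 hR
  have hG0 : 0 ≤ G := norm_nonneg _
  have hMG : M * G ≤ α - β := by linarith
  have hγ0 : 0 ≤ α - β := le_trans (mul_nonneg hM hG0) hMG
  have hq0 : 0 ≤ q := mul_nonneg hM (norm_nonneg _)
  have hq1 : q ≤ 1 := by
    have h8 : q * α ≤ 1 * α := by nlinarith [mul_le_mul_of_nonneg_left hRG hM]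
    exact le_of_mul_le_mul_right h8 hαpos
  -- the second derivative quadratic form along the segment
  have hφ0 : ∀ t : ℝ, 0 ≤ fderiv ℝ (fderiv ℝ f) (x + t • r) r r :=
    fun t => B2_diag_nonneg f hf hconv _ r
  have hφd : ∀ t : ℝ, HasDerivAt (fun t : ℝ => fderiv ℝ (fderiv ℝ f) (x + t • r) r r)
      (iteratedFDeriv ℝ 3 f (x + t • r) ![r, r, r]) t :=
    fun t => hasDerivAt_B2_line f hf x r r r t
  have hφ'le : ∀ t : ℝ, iteratedFDeriv ℝ 3 f (x + t • r) ![r, r, r]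
      ≤ q * fderiv ℝ (fderiv ℝ f) (x + t • r) r r := by
    intro t
    have h9 := hqsc (x + t • r) r r
    rw [hess_inner f hf] at h9
    calc iteratedFDeriv ℝ 3 f (x + t • r) ![r, r, r]
        ≤ M * fderiv ℝ (fderiv ℝ f) (x + t • r) r r * ‖r‖ := h9
      _ = q * fderiv ℝ (fderiv ℝ f) (x + t • r) r r := by rw [hqdef, hRdef]; ring
  -- Grönwall-type bound
  have hgr : ∀ t ∈ Set.Icc (0:ℝ) 1, fderiv ℝ (fderiv ℝ f) (x + t • r) r r
      ≤ (1 + 2 * (q * t)) * fderiv ℝ (fderiv ℝ f) (x + (0:ℝ) • r) r r := by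
    have hχd : ∀ t : ℝ, HasDerivAt
        (fun t : ℝ => Real.exp (-(q * t)) * fderiv ℝ (fderiv ℝ f) (x + t • r) r r)
        (Real.exp (-(q * t)) * (-q) * fderiv ℝ (fderiv ℝ f) (x + t • r) r r
          + Real.exp (-(q * t)) * iteratedFDeriv ℝ 3 f (x + t • r) ![r, r, r]) t := by
      intro t
      have he0 : HasDerivAt (fun t : ℝ => -(q * t)) (-q) t := by
        simpa using ((hasDerivAt_id t).const_mul q).fun_neg
      exact (he0.exp.mul (hφd t))
    have hχle : ∀ t ∈ Set.Icc (0:ℝ) 1,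
        Real.exp (-(q * t)) * fderiv ℝ (fderiv ℝ f) (x + t • r) r r
          ≤ Real.exp (-(q * (0:ℝ))) * fderiv ℝ (fderiv ℝ f) (x + (0:ℝ) • r) r r := by
      refine le_at_zero_of_deriv_nonpos hχd ?_
      intro t _
      have h10 := hφ'le t
      have h11 := hφ0 t
      nlinarith [Real.exp_pos (-(q * t))]
    intro t ht
    have h12 := hχle t ht
    rw [mul_comm] at h12
    have h13 : Real.exp (-(q * 0)) = 1 := by norm_num
    rw [h13, one_mul] at h12
    -- φ t ≤ exp (q t) * φ 0
    have h14 : fderiv ℝ (fderiv ℝ f) (x + t • r) r r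
        ≤ Real.exp (q * t) * fderiv ℝ (fderiv ℝ f) (x + (0:ℝ) • r) r r := by
      have h15 : fderiv ℝ (fderiv ℝ f) (x + t • r) r r * Real.exp (-(q * t))
          ≤ fderiv ℝ (fderiv ℝ f) (x + (0:ℝ) • r) r r := h12
      have h16 : fderiv ℝ (fderiv ℝ f) (x + t • r) r r
          = (fderiv ℝ (fderiv ℝ f) (x + t • r) r r * Real.exp (-(q * t)))
            * Real.exp (q * t) := by
        rw [mul_assoc, ← Real.exp_add]
        simp
      rw [h16]
      calc (fderiv ℝ (fderiv ℝ f) (x + t • r) r r * Real.exp (-(q * t))) * Real.exp (q * t)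
          ≤ fderiv ℝ (fderiv ℝ f) (x + (0:ℝ) • r) r r * Real.exp (q * t) :=
            mul_le_mul_of_nonneg_right h15 (Real.exp_pos (q * t)).le
        _ = Real.exp (q * t) * fderiv ℝ (fderiv ℝ f) (x + (0:ℝ) • r) r r := mul_comm _ _
    have h17 : Real.exp (q * t) ≤ 1 + 2 * (q * t) := by
      refine real_exp_le_one_add_two_mul (mul_nonneg hq0 ht.1) ?_
      calc q * t ≤ 1 * 1 := by
            apply mul_le_mul hq1 ht.2 ht.1 zero_le_one
        _ = 1 := by norm_num
    calc fderiv ℝ (fderiv ℝ f) (x + t • r) r r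
        ≤ Real.exp (q * t) * fderiv ℝ (fderiv ℝ f) (x + (0:ℝ) • r) r r := h14
      _ ≤ (1 + 2 * (q * t)) * fderiv ℝ (fderiv ℝ f) (x + (0:ℝ) • r) r r := by
          have := hφ0 0
          exact mul_le_mul_of_nonneg_right h17 (hφ0 0)

  -- the deviation vector
  set Δ : E := gradient f xp - gradient f x - hess f x r with hΔdef
  set W : ℝ := ‖Δ‖ with hWdef
  have hW0 : 0 ≤ W := norm_nonneg _
  have hρd : ∀ t : ℝ, HasDerivAt (fun t : ℝ => fderiv ℝ f (x + t • r) Δ)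
      (fderiv ℝ (fderiv ℝ f) (x + t • r) r Δ) t :=
    fun t => hasDerivAt_fderiv_line f hf x r Δ t
  have hφwd : ∀ t : ℝ, HasDerivAt (fun t : ℝ => fderiv ℝ (fderiv ℝ f) (x + t • r) r Δ)
      (iteratedFDeriv ℝ 3 f (x + t • r) ![r, r, Δ]) t :=
    fun t => hasDerivAt_B2_line f hf x r r Δ t
  have hφw'le : ∀ t : ℝ, iteratedFDeriv ℝ 3 f (x + t • r) ![r, r, Δ]
      ≤ M * fderiv ℝ (fderiv ℝ f) (x + t • r) r r * W := by
    intro t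
    have h9 := hqsc (x + t • r) r Δ
    rwa [hess_inner f hf] at h9
  -- first comparison (η)
  have hηle : ∀ t ∈ Set.Icc (0:ℝ) 1,
      (fderiv ℝ (fderiv ℝ f) (x + t • r) r Δ - fderiv ℝ (fderiv ℝ f) (x + (0:ℝ) • r) r Δ)
        - M * W * fderiv ℝ (fderiv ℝ f) (x + (0:ℝ) • r) r r * (t + q * t ^ 2) ≤ 0 := by
    have hηd : ∀ t : ℝ, HasDerivAt (fun t : ℝ =>
        (fderiv ℝ (fderiv ℝ f) (x + t • r) r Δ - fderiv ℝ (fderiv ℝ f) (x + (0:ℝ) • r) r Δ)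
          - M * W * fderiv ℝ (fderiv ℝ f) (x + (0:ℝ) • r) r r * (t + q * t ^ 2))
        (iteratedFDeriv ℝ 3 f (x + t • r) ![r, r, Δ]
          - M * W * fderiv ℝ (fderiv ℝ f) (x + (0:ℝ) • r) r r * (1 + q * (2 * t))) t := by
      intro t
      have hpoly : HasDerivAt (fun t : ℝ => t + q * t ^ 2) (1 + q * (2 * t)) t := by
        have hp1 : HasDerivAt (fun t : ℝ => t ^ 2) (2 * t) t := by
          simpa using hasDerivAt_pow 2 t
        simpa using (hasDerivAt_id t).fun_add (hp1.const_mul q)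
      exact ((hφwd t).sub_const _).sub
        (hpoly.const_mul (M * W * fderiv ℝ (fderiv ℝ f) (x + (0:ℝ) • r) r r))
    have h00 := le_at_zero_of_deriv_nonpos hηd ?_
    · intro t ht
      have h01 := h00 t ht
      have hz : (fderiv ℝ (fderiv ℝ f) (x + (0:ℝ) • r) r Δ
            - fderiv ℝ (fderiv ℝ f) (x + (0:ℝ) • r) r Δ)
          - M * W * fderiv ℝ (fderiv ℝ f) (x + (0:ℝ) • r) r r * ((0:ℝ) + q * (0:ℝ) ^ 2)
          ≤ 0 := by
        rw [sub_self]
        norm_num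
      exact le_trans h01 hz
    · intro t ht
      have hA := hφw'le t
      have hB := hgr t ⟨ht.1.le, ht.2.le⟩
      have hC := hφ0 0
      nlinarith [mul_le_mul_of_nonneg_left hB (mul_nonneg hM hW0)]
  -- second comparison (θ), giving the gradient-deviation bound
  have hθ1 : fderiv ℝ f (x + (1:ℝ) • r) Δ - fderiv ℝ f (x + (0:ℝ) • r) Δ
      - fderiv ℝ (fderiv ℝ f) (x + (0:ℝ) • r) r Δ
      ≤ M * W * fderiv ℝ (fderiv ℝ f) (x + (0:ℝ) • r) r r * (1/2 + q/3) := by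
    have hθd : ∀ t : ℝ, HasDerivAt (fun t : ℝ =>
        (fderiv ℝ f (x + t • r) Δ - fderiv ℝ f (x + (0:ℝ) • r) Δ
          - t * fderiv ℝ (fderiv ℝ f) (x + (0:ℝ) • r) r Δ)
          - M * W * fderiv ℝ (fderiv ℝ f) (x + (0:ℝ) • r) r r * (t ^ 2 / 2 + q * t ^ 3 / 3))
        ((fderiv ℝ (fderiv ℝ f) (x + t • r) r Δ - fderiv ℝ (fderiv ℝ f) (x + (0:ℝ) • r) r Δ)
          - M * W * fderiv ℝ (fderiv ℝ f) (x + (0:ℝ) • r) r r * (t + q * t ^ 2)) t := by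
      intro t
      have hpoly : HasDerivAt (fun t : ℝ => t ^ 2 / 2 + q * t ^ 3 / 3) (t + q * t ^ 2) t := by
        have h2' := (hasDerivAt_pow 2 t).div_const 2
        have h3' := ((hasDerivAt_pow 3 t).const_mul q).div_const 3
        refine (h2'.fun_add h3').congr_deriv ?_
        push_cast
        ring
      have hlin : HasDerivAt (fun t : ℝ => t * fderiv ℝ (fderiv ℝ f) (x + (0:ℝ) • r) r Δ)
          (fderiv ℝ (fderiv ℝ f) (x + (0:ℝ) • r) r Δ) t := by
        simpa using (hasDerivAt_id t).mul_const (fderiv ℝ (fderiv ℝ f) (x + (0:ℝ) • r) r Δ)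
      exact (((hρd t).sub_const _).sub hlin).sub
        (hpoly.const_mul (M * W * fderiv ℝ (fderiv ℝ f) (x + (0:ℝ) • r) r r))
    have h02 := le_at_zero_of_deriv_nonpos hθd (fun t ht => hηle t ⟨ht.1.le, ht.2.le⟩)
    have h03 := h02 1 (by norm_num)
    norm_num at h03 ⊢
    linarith
  -- identify the left side as ‖Δ‖²
  have hc1 : x + (1:ℝ) • r = xp := by
    rw [one_smul, hrdef]
    abel
  have hc0 : x + (0:ℝ) • r = x := by simp
  have hWsq : W ^ 2 ≤ M * W * fderiv ℝ (fderiv ℝ f) (x + (0:ℝ) • r) r r * (1/2 + q/3) := by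
    have e1 : fderiv ℝ f (x + (1:ℝ) • r) Δ = ⟪gradient f xp, Δ⟫ := by
      rw [hc1]; exact (gradient_inner_eq f xp Δ).symm
    have e2 : fderiv ℝ f (x + (0:ℝ) • r) Δ = ⟪gradient f x, Δ⟫ := by
      rw [hc0]; exact (gradient_inner_eq f x Δ).symm
    have e3 : fderiv ℝ (fderiv ℝ f) (x + (0:ℝ) • r) r Δ = ⟪hess f x r, Δ⟫ := by
      rw [hc0]; exact (hess_inner f hf x r Δ).symm
    have e4 : ⟪gradient f xp, Δ⟫ - ⟪gradient f x, Δ⟫ - ⟪hess f x r, Δ⟫ = W ^ 2 := by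
      rw [hWdef, ← real_inner_self_eq_norm_sq, hΔdef]
      simp only [inner_sub_left]
    rw [e1, e2, e3, e4] at hθ1
    exact hθ1
  -- bound on φ 0
  have hφ0b : fderiv ℝ (fderiv ℝ f) (x + (0:ℝ) • r) r r ≤ (G - (α - β) * R) * R := by
    have e0 : fderiv ℝ (fderiv ℝ f) (x + (0:ℝ) • r) r r = ⟪hess f x r, r⟫ := by
      rw [hc0]; exact (hess_inner f hf x r r).symm
    rw [e0]
    have e1 : hess f x r = H r - (H - hess f x) r := by
      rw [ContinuousLinearMap.sub_apply]; abel
    rw [e1, inner_sub_left]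
    have e2 : |⟪(H - hess f x) r, r⟫| ≤ (β * R) * R := by
      refine le_trans (abs_real_inner_le_norm _ _) ?_
      have e5 := (H - hess f x).le_opNorm r
      have e6 : ‖(H - hess f x) r‖ ≤ β * R := by
        refine le_trans e5 ?_
        exact mul_le_mul_of_nonneg_right hHerr (norm_nonneg r)
      exact mul_le_mul_of_nonneg_right e6 (norm_nonneg r)
    have e3 := abs_le.1 e2
    nlinarith [h1, e3.1]
  -- the bound ‖Δ‖ ≤ (α − β) ‖r‖
  have hGR : 0 ≤ G - (α - β) * R := by nlinarith [hRG]
  have hWle : W ≤ (α - β) * R := by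
    rcases eq_or_lt_of_le hW0 with h | hWpos
    · rw [← h]
      exact mul_nonneg hγ0 hR.le
    · have hc2 : (0:ℝ) ≤ 1/2 + q/3 := by linarith
      have hc3 : (1:ℝ)/2 + q/3 ≤ 1 := by linarith
      have hW1 : W ≤ M * fderiv ℝ (fderiv ℝ f) (x + (0:ℝ) • r) r r * (1/2 + q/3) := by
        have h20 : W * W ≤ (M * fderiv ℝ (fderiv ℝ f) (x + (0:ℝ) • r) r r * (1/2 + q/3)) * W := by
          nlinarith [hWsq]
        exact le_of_mul_le_mul_right h20 hWpos
      have s1 : M * fderiv ℝ (fderiv ℝ f) (x + (0:ℝ) • r) r r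
          ≤ M * ((G - (α - β) * R) * R) := mul_le_mul_of_nonneg_left hφ0b hM
      have s2 : M * fderiv ℝ (fderiv ℝ f) (x + (0:ℝ) • r) r r * (1/2 + q/3)
          ≤ M * ((G - (α - β) * R) * R) * (1/2 + q/3) :=
        mul_le_mul_of_nonneg_right s1 hc2
      have s3 : M * ((G - (α - β) * R) * R) * (1/2 + q/3) ≤ M * ((G - (α - β) * R) * R) := by
        nlinarith [mul_nonneg hM (mul_nonneg hGR hR.le)]
      have s4 : M * ((G - (α - β) * R) * R) ≤ M * (G * R) := by
        nlinarith [mul_nonneg (mul_nonneg hM hγ0) (mul_nonneg hR.le hR.le)]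
      have s5 : M * (G * R) ≤ (α - β) * R := by
        nlinarith [mul_le_mul_of_nonneg_right hMG hR.le]
      linarith
  -- the linear-part deviation bound
  have hDl : ‖gradient f xp - gradient f x - H r‖ ≤ α * R := by
    have e1 : gradient f xp - gradient f x - H r = Δ + (hess f x - H) r := by
      rw [hΔdef, ContinuousLinearMap.sub_apply]
      abel
    rw [e1]
    refine le_trans (norm_add_le _ _) ?_
    have e2 : ‖(hess f x - H) r‖ ≤ β * R := by
      have e5 := (hess f x - H).le_opNorm r
      rw [norm_sub_rev] at e5
      refine le_trans e5 ?_
      exact mul_le_mul_of_nonneg_right hHerr (norm_nonneg r)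
    nlinarith [hWle]
  -- final algebra
  rw [sub_add_eq_sub_sub]
  have hxm : x - xp = -r := by rw [hrdef]; abel
  rw [hxm]
  set Dl : E := gradient f xp - gradient f x - H r with hDldef
  have hinner : ⟪Dl - α • r, -r⟫ = -⟪Dl, r⟫ + α * (R * R) := by
    rw [inner_neg_right, inner_sub_left, real_inner_smul_left, real_inner_self_eq_norm_mul_norm]
    ring
  have hsm : ‖α • r‖ = α * R := by
    rw [norm_smul, Real.norm_eq_abs, abs_of_pos hαpos]
  have hexp : ‖Dl - α • r‖ ^ 2 = ‖Dl‖ ^ 2 - 2 * (α * ⟪Dl, r⟫) + α ^ 2 * (R * R) := by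
    rw [norm_sub_sq_real, real_inner_smul_right, hsm]
    ring
  rw [hinner, div_le_iff₀ (by linarith : (0:ℝ) < 2 * α), hexp]
  have hDsq : ‖Dl‖ ^ 2 ≤ α ^ 2 * (R * R) := by
    have := mul_self_le_mul_self (norm_nonneg Dl) hDl
    nlinarith [this]
  have hCS : |⟪Dl, r⟫| ≤ ‖Dl‖ * R := abs_real_inner_le_norm Dl r
  nlinarith [hDsq, abs_le.1 hCS]

end MainThm

/-- One-step inequality for convex quasi-self-concordant objectives:
if `α ≥ M‖∇f(x) + s‖ + β` then `⟨F'(x⁺), x − x⁺⟩ ≥ ‖F'(x⁺)‖²/(2α)`, where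
`F'(x⁺) = ∇f(x⁺) − ∇f(x) − (H + αI)(x⁺ − x)`. -/
theorem qsc_one_step_inequality {n : ℕ}
    (f : EuclideanSpace ℝ (Fin n) → ℝ) (hf : ContDiff ℝ 3 f)
    (hconv : ConvexOn ℝ Set.univ f)
    (M : ℝ) (hM : 0 ≤ M)
    (hqsc : ∀ x u v : EuclideanSpace ℝ (Fin n),
      iteratedFDeriv ℝ 3 f x ![u, u, v] ≤ M * ⟪hess f x u, u⟫ * ‖v‖)
    (ψ : EuclideanSpace ℝ (Fin n) → ℝ) (hψ : ConvexOn ℝ Set.univ ψ)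
    (x xp s : EuclideanSpace ℝ (Fin n)) (hs : IsSubgradAt ψ s x)
    (H : EuclideanSpace ℝ (Fin n) →L[ℝ] EuclideanSpace ℝ (Fin n)) (hH : IsSymmPSD H)
    (β : ℝ) (hβ : 0 ≤ β) (hHerr : ‖H - hess f x‖ ≤ β)
    (α : ℝ) (hαpos : 0 < α)
    (hα : M * ‖gradient f x + s‖ + β ≤ α)
    (hstep : CompositeStep (gradient f x) H α ψ x xp) :
    ‖gradient f xp - gradient f x - (H (xp - x) + α • (xp - x))‖ ^ 2 / (2 * α)
      ≤ ⟪gradient f xp - gradient f x - (H (xp - x) + α • (xp - x)), x - xp⟫ := by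
  exact qsc_one_step_inequality' f hf hconv M hM hqsc ψ hψ x xp s hs H hH β hβ hHerr
    α hαpos hα hstep
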